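/- Let k ≥ 1 be an odd natural number and set n = 2k+1 (so n ≡ 3 mod 4). Then 2·∏_{j ∈ {1,3,5,…,k}} j·(n−j), where the product runs over odd j with 1 ≤ j ≤ k, is a perfect square. (For example, for k=1: 2·(1·2) = 4; for k=3: 2·(1·6)·(3·4) = 144.) -/

import Mathlib

open Finset Nat

lemma aux_descFac (t : ℕ) : (2 * t + 1).descFactorial (t + 1) = 2 ^ t * (2 * t + 1)‼ := by
  have h1 : (2 * t + 1 - (t + 1))! * (2 * t + 1).descFactorial (t + 1) = (2 * t + 1)! :=
    Nat.factorial_mul_descFactorial (by omega)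
  have h2 : (2 * t + 1)! = (2 * t + 1)‼ * (2 * t)‼ := Nat.factorial_eq_mul_doubleFactorial (2 * t)
  have h3 : (2 * t)‼ = 2 ^ t * t ! := Nat.doubleFactorial_two_mul t
  have hsub : 2 * t + 1 - (t + 1) = t := by omega
  rw [hsub] at h1
  have ht : 0 < t ! := Nat.factorial_pos t
  have : t ! * (2 * t + 1).descFactorial (t + 1) = t ! * (2 ^ t * (2 * t + 1)‼) := by
    rw [h1, h2, h3]; ring
  exact Nat.eq_of_mul_eq_mul_left ht this

/-- For odd k ≥ 1 and n = 2k+1, twice the product of j(n−j) over odd j with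
1 ≤ j ≤ k is a perfect square. -/
theorem two_mul_prod_odd_j_mul_n_sub_j_sq (k : ℕ) (hk : 1 ≤ k) (hko : Odd k) :
    ∃ m : ℕ, 2 * ∏ j ∈ (Finset.range (k + 1)).filter (fun j => Odd j),
      j * ((2 * k + 1) - j) = m ^ 2 := by
  obtain ⟨t, rfl⟩ := hko
  set D := (2 * t + 1).descFactorial (t + 1) with hD
  refine ⟨2 * D, ?_⟩
  have hset : (Finset.range (2 * t + 1 + 1)).filter (fun j => Odd j)
      = (Finset.range (t + 1)).image (fun i => 2 * i + 1) := by
    ext j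
    simp only [Finset.mem_filter, Finset.mem_range, Finset.mem_image, Nat.odd_iff]
    constructor
    · rintro ⟨h1, h2⟩; exact ⟨j / 2, by omega, by omega⟩
    · rintro ⟨i, hi, rfl⟩; omega
  rw [hset, Finset.prod_image (by intro a _ b _ h; have h' : 2 * a + 1 = 2 * b + 1 := h; omega)]
  have hcongr : ∏ i ∈ Finset.range (t + 1),
      ((2 * i + 1) * ((2 * (2 * t + 1) + 1) - (2 * i + 1)))
      = ∏ i ∈ Finset.range (t + 1), ((2 * i + 1) * (2 * ((2 * t + 1) - i))) := by
    refine Finset.prod_congr rfl fun i hi => ?_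
    simp only [Finset.mem_range] at hi
    congr 1
    omega
  rw [hcongr, Finset.prod_mul_distrib]
  have hodd : ∏ i ∈ Finset.range (t + 1), (2 * i + 1) = (2 * t + 1)‼ :=
    by
    rw [Finset.prod_range_succ', Nat.doubleFactorial_eq_prod_odd]
    simp
  have heven : ∏ i ∈ Finset.range (t + 1), (2 * ((2 * t + 1) - i))
      = 2 ^ (t + 1) * D := by
    rw [Finset.prod_mul_distrib, Finset.prod_const, Finset.card_range, hD,
      Nat.descFactorial_eq_prod_range]
  rw [hodd, heven, hD, aux_descFac]
  ring
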